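/- Let X be a normal topological space. Then for every continuous map χ : X → V there exists a continuous map λ : X → I₀¹ with π ∘ λ = χ. -/

import Mathlib

open unitInterval

/-- The interval with doubled endpoints: `[0,1]` together with extra points
`0' = Sum.inr false` and `1' = Sum.inr true`, with `0 ⤳ 0'` and `1 ⤳ 1'`. -/
def I01 : Type := unitInterval ⊕ Bool

instance : TopologicalSpace I01 where
  IsOpen U := IsOpen (Sum.inl ⁻¹' U : Set unitInterval) ∧
    (Sum.inr false ∈ U → Sum.inl (0 : unitInterval) ∈ U) ∧
    (Sum.inr true ∈ U → Sum.inl (1 : unitInterval) ∈ U)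
  isOpen_univ := ⟨isOpen_univ, fun _ => trivial, fun _ => trivial⟩
  isOpen_inter U V hU hV := ⟨hU.1.inter hV.1,
    fun h => ⟨hU.2.1 h.1, hV.2.1 h.2⟩, fun h => ⟨hU.2.2 h.1, hV.2.2 h.2⟩⟩
  isOpen_sUnion S hS := by
    refine ⟨?_, ?_, ?_⟩
    · exact (congrArg IsOpen (show (Sum.inl ⁻¹' ⋃₀ S : Set unitInterval) =
        ⋃ U ∈ S, (Sum.inl ⁻¹' U : Set unitInterval) from Set.preimage_sUnion)).mpr
        (isOpen_biUnion fun U hU => (hS U hU).1)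
    · rintro ⟨U, hU, hmem⟩
      exact ⟨U, hU, (hS U hU).2.1 hmem⟩
    · rintro ⟨U, hU, hmem⟩
      exact ⟨U, hU, (hS U hU).2.2 hmem⟩

/-- The three-point space with an open point `c` and two closed points `L`, `R`. -/
inductive V : Type
  | L | c | R

instance : TopologicalSpace V where
  IsOpen U := (V.L ∈ U → V.c ∈ U) ∧ (V.R ∈ U → V.c ∈ U)
  isOpen_univ := ⟨fun _ => trivial, fun _ => trivial⟩
  isOpen_inter U W hU hW := ⟨fun h => ⟨hU.1 h.1, hW.1 h.2⟩, fun h => ⟨hU.2 h.1, hW.2 h.2⟩⟩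
  isOpen_sUnion S hS := by
    constructor
    · rintro ⟨U, hU, hmem⟩
      exact ⟨U, hU, (hS U hU).1 hmem⟩
    · rintro ⟨U, hU, hmem⟩
      exact ⟨U, hU, (hS U hU).2 hmem⟩

/-- The map `π : I₀¹ → V` collapsing `[0,1]` to the open point `c`. -/
def pi1 : I01 → V
  | Sum.inl _ => V.c
  | Sum.inr false => V.L
  | Sum.inr true => V.R

/-- The map `ι : I₀¹ → [0,1]` collapsing the doubled endpoints. -/
def iota : I01 → unitInterval
  | Sum.inl x => x
  | Sum.inr false => 0
  | Sum.inr true => 1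


/-- if `X` is normal, every continuous `χ : X → V` lifts through
`π : I₀¹ → V`. -/
theorem lifts_of_normal (X : Type) [TopologicalSpace X] [NormalSpace X] :
    ∀ χ : X → V, Continuous χ →
      ∃ lam : X → I01, Continuous lam ∧ pi1 ∘ lam = χ := by
  classical
  intro χ hχ
  -- χ⁻¹{L}, χ⁻¹{R} are closed and disjoint
  have hLopen : IsOpen ({V.c, V.R} : Set V) := by
    constructor <;> intro h <;> simp_all
  have hRopen : IsOpen ({V.c, V.L} : Set V) := by
    constructor <;> intro h <;> simp_all
  have hLc : IsClosed (χ ⁻¹' {V.L}) := by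
    rw [← isOpen_compl_iff]
    have : (χ ⁻¹' {V.L})ᶜ = χ ⁻¹' {V.c, V.R} := by
      ext x; simp; cases χ x <;> simp
    rw [this]; exact hLopen.preimage hχ
  have hRc : IsClosed (χ ⁻¹' {V.R}) := by
    rw [← isOpen_compl_iff]
    have : (χ ⁻¹' {V.R})ᶜ = χ ⁻¹' {V.c, V.L} := by
      ext x; simp; cases χ x <;> simp
    rw [this]; exact hRopen.preimage hχ
  have hd : Disjoint (χ ⁻¹' {V.L}) (χ ⁻¹' {V.R}) := by
    rw [Set.disjoint_left]; intro x hx hx'; simp_all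
  obtain ⟨f, hf0, hf1, hfI⟩ := exists_continuous_zero_one_of_isClosed hLc hRc hd
  set g : X → unitInterval := fun x => ⟨f x, hfI x⟩ with hg
  have hgc : Continuous g := Continuous.subtype_mk f.continuous _
  refine ⟨fun x => match χ x with
    | V.L => Sum.inr false
    | V.R => Sum.inr true
    | V.c => Sum.inl (g x), ?_, ?_⟩
  · rw [continuous_def]
    intro U hU
    obtain ⟨hU0, hUf, hUt⟩ := hU
    -- W : open set in V
    set W : Set V := {V.c} ∪ (if Sum.inr false ∈ U then {V.L} else ∅)
        ∪ (if Sum.inr true ∈ U then {V.R} else ∅) with hW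
    have hcW : V.c ∈ W := by simp [hW]
    have hWopen : IsOpen W := ⟨fun _ => hcW, fun _ => hcW⟩
    have key : (fun x => match χ x with
        | V.L => Sum.inr false
        | V.R => Sum.inr true
        | V.c => Sum.inl (g x)) ⁻¹' U = (g ⁻¹' (Sum.inl ⁻¹' U)) ∩ χ ⁻¹' W := by
      ext x
      simp only [Set.mem_preimage, Set.mem_inter_iff]
      rcases hv : χ x with _ | _ | _
      · -- χ x = L, so f x = 0
        have hg0 : g x = 0 := by
          apply Subtype.ext; exact hf0 hv
        simp only [hg0, hW]
        constructor
        · intro h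
          refine ⟨hUf h, by simp [h]; exact h⟩
        · rintro ⟨h1, h2⟩
          rcases h2 with (h2|h2)|h2
          · simp at h2
          · split_ifs at h2 with hh
            · exact hh
            · simp at h2
          · split_ifs at h2 <;> simp at h2
      · -- χ x = c
        simp only [hW]
        constructor
        · intro h; exact ⟨h, Or.inl (Or.inl rfl)⟩
        · rintro ⟨h1, _⟩; exact h1
      · -- χ x = R, f x = 1
        have hg1 : g x = 1 := by
          apply Subtype.ext
          have := hf1 hv
          simpa [hg] using this
        simp only [hg1, hW]
        constructor
        · intro h
          refine ⟨hUt h, by simp [h]; exact h⟩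
        · rintro ⟨h1, h2⟩
          rcases h2 with (h2|h2)|h2
          · simp at h2
          · split_ifs at h2 <;> simp at h2
          · split_ifs at h2 with hh
            · exact hh
            · simp at h2
    rw [key]
    exact (hU0.preimage hgc).inter (hWopen.preimage hχ)
  · funext x
    rcases hv : χ x with _ | _ | _ <;> simp [pi1, hv]
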